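/- Define g̃₁(x) = sinh²x·cosh x + x·sinh x - 2x²·cosh x for x ≥ 0. Then g̃₁(0) = g̃₁'(0) = g̃₁''(0) = 0 and g̃₁'''(x) > 0 for all x > 0; consequently g̃₁(x) > 0 for all x > 0. -/

import Mathlib

open Real

private lemma pos_of_deriv_pos (f f' : ℝ → ℝ) (hd : ∀ x, HasDerivAt f (f' x) x)
    (h0 : f 0 = 0) (hpos : ∀ x : ℝ, 0 < x → 0 < f' x) : ∀ x : ℝ, 0 < x → 0 < f x := by
  intro x hx
  have hmono : StrictMonoOn f (Set.Ici 0) := by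
    apply strictMonoOn_of_deriv_pos (convex_Ici 0)
      (fun y _ => (hd y).continuousAt.continuousWithinAt)
    intro y hy
    rw [interior_Ici] at hy
    rw [(hd y).deriv]
    exact hpos y hy
  have := hmono (Set.self_mem_Ici) (Set.mem_Ici.mpr hx.le) hx
  rwa [h0] at this

private noncomputable def G1 : ℝ → ℝ := fun x =>
  Real.sinh x ^ 2 * Real.cosh x + x * Real.sinh x - 2 * x ^ 2 * Real.cosh x
private noncomputable def G2 : ℝ → ℝ := fun x =>
  2 * Real.sinh x * Real.cosh x ^ 2 + Real.sinh x ^ 3 + Real.sinh x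
    - 3 * x * Real.cosh x - 2 * x ^ 2 * Real.sinh x
private noncomputable def G3 : ℝ → ℝ := fun x =>
  2 * Real.cosh x ^ 3 + 7 * Real.sinh x ^ 2 * Real.cosh x - 2 * Real.cosh x
    - 7 * x * Real.sinh x - 2 * x ^ 2 * Real.cosh x
private noncomputable def G4 : ℝ → ℝ := fun x =>
  20 * Real.sinh x * Real.cosh x ^ 2 + 7 * Real.sinh x ^ 3 - 9 * Real.sinh x
    - 11 * x * Real.cosh x - 2 * x ^ 2 * Real.sinh x

private lemma hd1 : ∀ x, HasDerivAt G1 (G2 x) x := by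
  intro x
  have hs := Real.hasDerivAt_sinh x
  have hc := Real.hasDerivAt_cosh x
  have hx : HasDerivAt (fun y : ℝ => y) 1 x := hasDerivAt_id x
  have h := (((hs.pow 2).mul hc).add (hx.mul hs)).sub
    (((hasDerivAt_pow 2 x).const_mul 2).mul hc)
  convert h using 1
  all_goals first | rfl | (simp only [G2, Pi.pow_apply]; push_cast; ring)

private lemma hd2 : ∀ x, HasDerivAt G2 (G3 x) x := by
  intro x
  have hs := Real.hasDerivAt_sinh x
  have hc := Real.hasDerivAt_cosh x
  have hx : HasDerivAt (fun y : ℝ => y) 1 x := hasDerivAt_id x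
  have h := (((((hs.const_mul 2).mul (hc.pow 2)).add (hs.pow 3)).add hs).sub
    ((hx.const_mul 3).mul hc)).sub (((hasDerivAt_pow 2 x).const_mul 2).mul hs)
  convert h using 1
  all_goals first | rfl | (simp only [G3, Pi.pow_apply]; push_cast; ring)

private lemma hd3 : ∀ x, HasDerivAt G3 (G4 x) x := by
  intro x
  have hs := Real.hasDerivAt_sinh x
  have hc := Real.hasDerivAt_cosh x
  have hx : HasDerivAt (fun y : ℝ => y) 1 x := hasDerivAt_id x
  have h := (((((hc.pow 3).const_mul 2).add (((hs.pow 2).const_mul 7).mul hc)).sub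
    (hc.const_mul 2)).sub ((hx.const_mul 7).mul hs)).sub
    (((hasDerivAt_pow 2 x).const_mul 2).mul hc)
  convert h using 1
  all_goals first | rfl | (simp only [G4, Pi.pow_apply]; push_cast; ring)

private lemma dG1 : deriv G1 = G2 := funext fun x => (hd1 x).deriv
private lemma dG2 : deriv G2 = G3 := funext fun x => (hd2 x).deriv
private lemma dG3 : deriv G3 = G4 := funext fun x => (hd3 x).deriv

private lemma hG4 : ∀ x : ℝ, 0 < x → 0 < G4 x := by
  intro x hx
  have hs : x < Real.sinh x := Real.self_lt_sinh_iff.mpr hx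
  have hc : 1 ≤ Real.cosh x := Real.one_le_cosh x
  have hsq : Real.cosh x ^ 2 = 1 + Real.sinh x ^ 2 := Real.cosh_sq' x
  have hs0 : 0 < Real.sinh x := hx.trans hs
  have h1 : 0 < 7 * Real.sinh x ^ 2 - 2 * x ^ 2 := by nlinarith
  have h2 : x < Real.sinh x * Real.cosh x := by nlinarith
  simp only [G4]
  nlinarith [mul_pos hs0 h1, mul_pos (sub_pos.mpr h2) (Real.cosh_pos (x := x)),
    pow_pos hs0 3]

private lemma hG3 : ∀ x : ℝ, 0 < x → 0 < G3 x :=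
  pos_of_deriv_pos G3 G4 hd3 (by simp [G3]) hG4
private lemma hG2 : ∀ x : ℝ, 0 < x → 0 < G2 x :=
  pos_of_deriv_pos G2 G3 hd2 (by simp [G2]) hG3
private lemma hG1 : ∀ x : ℝ, 0 < x → 0 < G1 x :=
  pos_of_deriv_pos G1 G2 hd1 (by simp [G1]) hG2

/-- `g̃₁(x) = sinh²x·cosh x + x·sinh x - 2x²·cosh x` vanishes to second order at `0`,
has strictly positive third derivative on `(0,∞)`, and hence is positive on `(0,∞)`. -/
theorem stmt12 :
    let g₁ : ℝ → ℝ := fun x =>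
      Real.sinh x ^ 2 * Real.cosh x + x * Real.sinh x - 2 * x ^ 2 * Real.cosh x
    g₁ 0 = 0 ∧ deriv g₁ 0 = 0 ∧ deriv (deriv g₁) 0 = 0 ∧
    (∀ x : ℝ, 0 < x → 0 < deriv (deriv (deriv g₁)) x) ∧
    (∀ x : ℝ, 0 < x → 0 < g₁ x) := by
  intro g₁
  have hg : g₁ = G1 := rfl
  rw [hg, dG1, dG2, dG3]
  refine ⟨by simp [G1], by simp [G2], by simp [G3], hG4, hG1⟩
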